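/- Suppose mechanism M₁ : X → Prob(T₁) is (S, Q_x, κ₁, δ₁)-persuasively private, and for every t ∈ T₁ the mechanism M₂((·,t), ·) : X → Prob(T₂) is (S, Q_x, κ₂, δ₂)-persuasively private, where the prior class Q_x is conjugate to both M₁ and M₂ (closed under Bayes updating almost surely). Then the composed mechanism M₁ ⊗ M₂ releasing (T₁, T₂) is (S, Q_x, κ₁+κ₂, δ₁+δ₂)-persuasively private. -/

import Mathlib

open MeasureTheory ProbabilityTheory

/-- Composition of persuasive privacy: if `M₁` is `(S, 𝒬ₓ, κ₁, δ₁)`-PP and, for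
every `t₁`, `M₂(·, t₁)` is `(S, 𝒬ₓ, κ₂, δ₂)`-PP, with the prior class `𝒬ₓ` conjugate (closed
under Bayes updating, a.s.) and posteriors updated sequentially, then the composed mechanism
`M₁ ⊗ M₂` is `(S, 𝒬ₓ, κ₁ + κ₂, δ₁ + δ₂)`-PP. Posteriors are given abstractly: `post₁ Q t₁`
is `Q(·∣M₁,t₁)`, `post₂ t₁ Q' t₂` is the update of `Q'` by `M₂(·,t₁)` on observing `t₂`, and
`post₁₂ Q (t₁,t₂) = Q(·∣M₁⊗M₂,(t₁,t₂))` which Bayes-coherently equals the sequential update. -/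
theorem stmt5 {X T₁ T₂ P : Type*}
    [MeasurableSpace X] [MeasurableSpace T₁] [MeasurableSpace T₂]
    (M₁ : Kernel X T₁) [IsMarkovKernel M₁]
    (M₂ : Kernel (X × T₁) T₂) [IsMarkovKernel M₂]
    (S : P → X → ℝ) (Qs : X → Set P)
    (post₁ : P → T₁ → P) (post₂ : T₁ → P → T₂ → P) (post₁₂ : P → T₁ × T₂ → P)
    (κ₁ κ₂ δ₁ δ₂ : ℝ) (hδ₁ : 0 ≤ δ₁) (hδ₂ : 0 ≤ δ₂)
    (hmeas₁ : ∀ x Q, MeasurableSet {t₁ : T₁ | S Q x - S (post₁ Q t₁) x ≤ κ₁})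
    (hmeas₂ : ∀ x Q, MeasurableSet
      {p : T₁ × T₂ | S (post₁ Q p.1) x - S (post₂ p.1 (post₁ Q p.1) p.2) x ≤ κ₂})
    (hcoh : ∀ Q t₁ t₂, post₁₂ Q (t₁, t₂) = post₂ t₁ (post₁ Q t₁) t₂)
    (hconj : ∀ x, ∀ Q ∈ Qs x, ∀ᵐ t₁ ∂(M₁ x), post₁ Q t₁ ∈ Qs x)
    (hPP₁ : ∀ x, ∀ Q ∈ Qs x,
      M₁ x {t₁ | S Q x - S (post₁ Q t₁) x ≤ κ₁} ≥ ENNReal.ofReal (1 - δ₁))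
    (hPP₂ : ∀ t₁ x, ∀ Q ∈ Qs x,
      M₂ (x, t₁) {t₂ | S Q x - S (post₂ t₁ Q t₂) x ≤ κ₂} ≥ ENNReal.ofReal (1 - δ₂)) :
    ∀ x, ∀ Q ∈ Qs x,
      (M₁ ⊗ₖ M₂) x {p : T₁ × T₂ | S Q x - S (post₁₂ Q p) x ≤ κ₁ + κ₂} ≥
        ENNReal.ofReal (1 - (δ₁ + δ₂)) := by
  intro x Q hQ
  set μ := (M₁ ⊗ₖ M₂) x with hμ
  set A₁ : Set T₁ := {t₁ | S Q x - S (post₁ Q t₁) x ≤ κ₁} with hA₁def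
  set A : Set (T₁ × T₂) := {p | p.1 ∈ A₁} with hAdef
  set B : Set (T₁ × T₂) :=
    {p | S (post₁ Q p.1) x - S (post₂ p.1 (post₁ Q p.1) p.2) x ≤ κ₂} with hBdef
  have hAm : MeasurableSet A := (hmeas₁ x Q).preimage measurable_fst
  have hBm : MeasurableSet B := hmeas₂ x Q
  -- ENNReal arithmetic helper
  have key : ∀ (m : ENNReal) (d : ℝ), m ≤ 1 → ENNReal.ofReal (1 - d) ≤ m →
      1 - m ≤ ENNReal.ofReal d := by
    intro m d hm1 hm
    refine tsub_le_iff_right.mpr ?_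
    calc (1 : ENNReal) = ENNReal.ofReal ((1 - d) + d) := by simp
    _ ≤ ENNReal.ofReal (1 - d) + ENNReal.ofReal d := ENNReal.ofReal_add_le
    _ ≤ ENNReal.ofReal d + m := by rw [add_comm]; exact add_le_add_right hm _
  -- μ Aᶜ ≤ δ₁
  have hA1 : μ A = M₁ x A₁ := by
    conv_rhs => rw [← Kernel.fst_compProd M₁ M₂]
    rw [Kernel.fst_apply' _ _ (hmeas₁ x Q)]
  have hAc : μ Aᶜ ≤ ENNReal.ofReal δ₁ := by
    have h1 : μ A + μ Aᶜ = 1 := by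
      rw [measure_add_measure_compl hAm]; simp [hμ]
    have : μ Aᶜ = 1 - μ A := by
      rw [← h1]; exact (ENNReal.add_sub_cancel_left (measure_ne_top _ _)).symm
    rw [this]
    exact key _ δ₁ prob_le_one (by rw [hA1]; exact hPP₁ x Q hQ)
  -- μ Bᶜ ≤ δ₂
  have hBc : μ Bᶜ ≤ ENNReal.ofReal δ₂ := by
    rw [hμ, Kernel.compProd_apply hBm.compl]
    calc ∫⁻ t₁, M₂ (x, t₁) (Prod.mk t₁ ⁻¹' Bᶜ) ∂(M₁ x)
        ≤ ∫⁻ _, ENNReal.ofReal δ₂ ∂(M₁ x) := by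
          refine lintegral_mono_ae ?_
          filter_upwards [hconj x Q hQ] with t₁ ht₁
          have hsec : MeasurableSet (Prod.mk t₁ ⁻¹' B) := hBm.preimage (by fun_prop)
          have h1 : M₂ (x, t₁) (Prod.mk t₁ ⁻¹' B) + M₂ (x, t₁) (Prod.mk t₁ ⁻¹' B)ᶜ = 1 := by
            rw [measure_add_measure_compl hsec]; simp
          have h2 : M₂ (x, t₁) (Prod.mk t₁ ⁻¹' Bᶜ) = 1 - M₂ (x, t₁) (Prod.mk t₁ ⁻¹' B) := by
            rw [Set.preimage_compl, ← h1]
            exact (ENNReal.add_sub_cancel_left (measure_ne_top _ _)).symm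
          rw [h2]
          refine key _ δ₂ prob_le_one ?_
          exact hPP₂ t₁ x (post₁ Q t₁) ht₁
    _ = ENNReal.ofReal δ₂ := by simp
  -- combine
  have hsub : A ∩ B ⊆ {p : T₁ × T₂ | S Q x - S (post₁₂ Q p) x ≤ κ₁ + κ₂} := by
    rintro ⟨t₁, t₂⟩ ⟨h1, h2⟩
    simp only [hAdef, hA₁def, Set.mem_setOf_eq] at h1
    simp only [hBdef, Set.mem_setOf_eq] at h2
    simp only [Set.mem_setOf_eq, hcoh]
    linarith
  rcases le_or_gt 1 (δ₁ + δ₂) with hd | hd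
  · calc ENNReal.ofReal (1 - (δ₁ + δ₂)) = 0 := by
          rw [ENNReal.ofReal_eq_zero]; linarith
    _ ≤ _ := zero_le
  calc ENNReal.ofReal (1 - (δ₁ + δ₂))
      ≤ 1 - (ENNReal.ofReal δ₁ + ENNReal.ofReal δ₂) := by
        refine ENNReal.le_sub_of_add_le_right (by simp [ENNReal.add_ne_top]) ?_
        rw [← ENNReal.ofReal_add hδ₁ hδ₂,
          ← ENNReal.ofReal_add (by linarith : (0:ℝ) ≤ 1 - (δ₁ + δ₂)) (by linarith)]
        norm_num
  _ ≤ 1 - μ (A ∩ B)ᶜ := by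
        refine tsub_le_tsub_left ?_ _
        rw [Set.compl_inter]
        exact (measure_union_le _ _).trans (add_le_add hAc hBc)
  _ ≤ μ (A ∩ B) := by
        have h1 : μ (A ∩ B) + μ (A ∩ B)ᶜ = 1 := by
          rw [measure_add_measure_compl (hAm.inter hBm)]; simp [hμ]
        rw [tsub_le_iff_right]
        exact h1.ge
  _ ≤ _ := measure_mono hsub
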